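/- For every ε > 0 there exists a constant c > 0 such that the following holds: for every probability p₀ with 0 < p₀ ≤ 1 and every graph H with e(H)·p₀ ≥ c, E[q*(H_{p₀})] > sup_{p₀ ≤ p ≤ 1} E[q*(H_p)] − ε. -/

import Mathlib

open Finset
open scoped Classical
set_option linter.unusedSectionVars false
set_option maxHeartbeats 1000000

/-- The number of edges of a finite graph. -/
noncomputable def edgeCount {V : Type} [Fintype V] [DecidableEq V] (G : SimpleGraph V) : ℕ :=
  G.edgeFinset.card

/-- vol(A): the sum over vertices of A of their degree in G. -/
noncomputable def degSum {V : Type} [Fintype V] [DecidableEq V] (G : SimpleGraph V)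
    (A : Finset V) : ℕ :=
  ∑ v ∈ A, G.degree v

/-- e(A): the number of edges of G with both endpoints in A. -/
noncomputable def intEdges {V : Type} [Fintype V] [DecidableEq V] (G : SimpleGraph V)
    (A : Finset V) : ℕ :=
  (G.edgeFinset.filter (fun e => ∀ v ∈ e, v ∈ A)).card

/-- The modularity score q_𝒜(G) of a vertex partition 𝒜 of G; it is 0 if G has no edges. -/
noncomputable def modScore {V : Type} [Fintype V] [DecidableEq V] (G : SimpleGraph V)
    (P : Finpartition (univ : Finset V)) : ℝ :=
  if edgeCount G = 0 then 0 else
    (∑ A ∈ P.parts, (intEdges G A : ℝ)) / (edgeCount G : ℝ)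
      - (∑ A ∈ P.parts, (degSum G A : ℝ) ^ 2) / (4 * (edgeCount G : ℝ) ^ 2)

/-- The modularity q*(G) of a graph: the maximum of q_𝒜(G) over all vertex partitions 𝒜. -/
noncomputable def modularity {V : Type} [Fintype V] [DecidableEq V] (G : SimpleGraph V) : ℝ :=
  ⨆ P : Finpartition (univ : Finset V), modScore G P

/-- The probability that the random subgraph G_p of G (each edge of G retained
independently with probability p) satisfies the predicate Q. -/
noncomputable def subgraphProb {V : Type} [Fintype V] [DecidableEq V] (G : SimpleGraph V)
    (p : ℝ) (Q : SimpleGraph V → Prop) : ℝ :=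
  ∑ F ∈ G.edgeFinset.powerset,
    if Q (SimpleGraph.fromEdgeSet (F : Set (Sym2 V))) then
      p ^ F.card * (1 - p) ^ (G.edgeFinset.card - F.card)
    else 0

/-- The expected modularity E[q*(G_p)] of the random subgraph G_p of G, in which
each edge of G is retained independently with probability p. -/
noncomputable def expMod {V : Type} [Fintype V] [DecidableEq V] (G : SimpleGraph V)
    (p : ℝ) : ℝ :=
  ∑ F ∈ G.edgeFinset.powerset,
    p ^ F.card * (1 - p) ^ (G.edgeFinset.card - F.card) *
      modularity (SimpleGraph.fromEdgeSet (F : Set (Sym2 V)))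


section GraphLemmas
variable {V : Type} [Fintype V] [DecidableEq V] {G : SimpleGraph V}

lemma degSum_eq (G : SimpleGraph V) (A : Finset V) :
    degSum G A = ∑ e ∈ G.edgeFinset, (A.filter (fun v => v ∈ e)).card := by
  unfold degSum
  have h : ∀ v, G.degree v = (G.edgeFinset.filter (fun e => v ∈ e)).card := by
    intro v
    rw [← SimpleGraph.card_incidenceFinset_eq_degree, SimpleGraph.incidenceFinset_eq_filter]
  rw [Finset.sum_congr rfl (fun v _ => h v)]
  simp_rw [Finset.card_filter]
  rw [Finset.sum_comm]

lemma edgeFinset_from {F : Finset (Sym2 V)} (hF : F ⊆ G.edgeFinset)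
    {inst : Fintype (SimpleGraph.fromEdgeSet (F : Set (Sym2 V))).edgeSet} :
    @SimpleGraph.edgeFinset _ (SimpleGraph.fromEdgeSet (F : Set (Sym2 V))) inst = F := by
  ext e
  rw [SimpleGraph.mem_edgeFinset]
  simp only [SimpleGraph.edgeSet_fromEdgeSet, Set.mem_diff,
    Finset.mem_coe, Set.mem_setOf_eq]
  constructor
  · rintro ⟨he, -⟩; exact he
  · intro he
    exact ⟨he, G.not_isDiag_of_mem_edgeSet (SimpleGraph.mem_edgeFinset.mp (hF he))⟩

lemma edgeCount_from {F : Finset (Sym2 V)} (hF : F ⊆ G.edgeFinset) :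
    edgeCount (SimpleGraph.fromEdgeSet (F : Set (Sym2 V))) = F.card := by
  unfold edgeCount; rw [edgeFinset_from hF]

lemma intEdges_from {F : Finset (Sym2 V)} (hF : F ⊆ G.edgeFinset) (A : Finset V) :
    intEdges (SimpleGraph.fromEdgeSet (F : Set (Sym2 V))) A
      = (F.filter (fun e => ∀ v ∈ e, v ∈ A)).card := by
  unfold intEdges; rw [edgeFinset_from hF]

lemma degSum_from {F : Finset (Sym2 V)} (hF : F ⊆ G.edgeFinset) (A : Finset V) :
    degSum (SimpleGraph.fromEdgeSet (F : Set (Sym2 V))) A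
      = ∑ e ∈ F, (A.filter (fun v => v ∈ e)).card := by
  rw [degSum_eq, edgeFinset_from hF]

lemma sum_intEdges_le (G : SimpleGraph V) (P : Finpartition (univ : Finset V)) :
    ∑ A ∈ P.parts, intEdges G A ≤ edgeCount G := by
  unfold intEdges edgeCount
  rw [← Finset.card_biUnion]
  · apply Finset.card_le_card
    intro e he
    rw [Finset.mem_biUnion] at he
    obtain ⟨A, hA, he⟩ := he
    exact (Finset.mem_filter.mp he).1
  · intro A hA B hB hAB
    simp only [Function.onFun]
    rw [Finset.disjoint_left]
    intro e heA heB
    obtain ⟨-, hins⟩ := Finset.mem_filter.mp heA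
    obtain ⟨-, hins'⟩ := Finset.mem_filter.mp heB
    induction e using Sym2.ind with
    | _ u v =>
      exact hAB (P.eq_of_mem_parts hA hB (hins u (by simp)) (hins' u (by simp)))

lemma sum_degSum (G : SimpleGraph V) (P : Finpartition (univ : Finset V)) :
    ∑ A ∈ P.parts, degSum G A = 2 * edgeCount G := by
  unfold degSum edgeCount
  rw [← SimpleGraph.sum_degrees_eq_twice_card_edges]
  conv_rhs => rw [← P.biUnion_parts]
  rw [Finset.sum_biUnion P.disjoint]
  rfl

lemma part_filter_sum (P : Finpartition (univ : Finset V)) (p : V → Prop) [DecidablePred p] :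
    ∑ A ∈ P.parts, (A.filter p).card = ((univ : Finset V).filter p).card := by
  have hdisj : ∀ A ∈ P.parts, ∀ B ∈ P.parts, A ≠ B →
      Disjoint ((id A).filter p) ((id B).filter p) := by
    intro A hA B hB hAB
    exact Finset.disjoint_filter_filter (P.disjoint hA hB hAB)
  conv_rhs => rw [← P.biUnion_parts]
  rw [Finset.filter_biUnion, Finset.card_biUnion hdisj]
  rfl

lemma filter_mem_card_le (e : Sym2 V) : ((univ : Finset V).filter (fun v => v ∈ e)).card ≤ 2 := by
  induction e using Sym2.ind with
  | _ u v =>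
    have h : (univ : Finset V).filter (fun x => x ∈ s(u, v)) ⊆ {u, v} := by
      intro x hx
      rcases Sym2.mem_iff.mp (Finset.mem_filter.mp hx).2 with h | h <;> simp [h]
    calc ((univ : Finset V).filter (fun x => x ∈ s(u, v))).card ≤ ({u, v} : Finset V).card :=
          Finset.card_le_card h
      _ ≤ 2 := Finset.card_insert_le u {v} |>.trans (by simp)

lemma sum_wA_le (P : Finpartition (univ : Finset V)) (e : Sym2 V) :
    ∑ A ∈ P.parts, (A.filter (fun v => v ∈ e)).card ≤ 2 := by
  rw [part_filter_sum]
  exact filter_mem_card_le e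

lemma ind_sum_le (P : Finpartition (univ : Finset V)) (e : Sym2 V) :
    ∑ A ∈ P.parts, (if (∀ v ∈ e, v ∈ A) then (1 : ℝ) else 0) ≤ 1 := by
  rw [Finset.sum_boole]
  have h : (P.parts.filter (fun A => ∀ v ∈ e, v ∈ A)).card ≤ 1 := by
    rw [Finset.card_le_one]
    intro A hA B hB
    obtain ⟨hA1, hA2⟩ := Finset.mem_filter.mp hA
    obtain ⟨hB1, hB2⟩ := Finset.mem_filter.mp hB
    induction e using Sym2.ind with
    | _ u v => exact P.eq_of_mem_parts hA1 hB1 (hA2 u (by simp)) (hB2 u (by simp))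
  exact_mod_cast h

instance : Nonempty (Finpartition (univ : Finset V)) := ⟨⊥⟩

lemma modScore_le_one (G : SimpleGraph V) (P : Finpartition (univ : Finset V)) :
    modScore G P ≤ 1 := by
  unfold modScore
  split_ifs with h
  · norm_num
  · have hm : (0 : ℝ) < (edgeCount G : ℝ) := by
      exact_mod_cast Nat.pos_of_ne_zero h
    have h1 : (∑ A ∈ P.parts, (intEdges G A : ℝ)) ≤ (edgeCount G : ℝ) := by
      rw [← Nat.cast_sum]
      exact_mod_cast sum_intEdges_le G P
    have h2 : (0 : ℝ) ≤ ∑ A ∈ P.parts, (degSum G A : ℝ) ^ 2 :=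
      Finset.sum_nonneg fun A _ => sq_nonneg _
    have h3 : (∑ A ∈ P.parts, (intEdges G A : ℝ)) / (edgeCount G : ℝ) ≤ 1 := by
      rw [div_le_one hm]; exact h1
    have h4 : (0 : ℝ) ≤ (∑ A ∈ P.parts, (degSum G A : ℝ) ^ 2) / (4 * (edgeCount G : ℝ) ^ 2) := by
      positivity
    linarith

lemma modularity_bddAbove (G : SimpleGraph V) :
    BddAbove (Set.range (modScore G)) := by
  refine ⟨1, ?_⟩
  rintro x ⟨P, rfl⟩
  exact modScore_le_one G P

lemma modScore_le_modularity (G : SimpleGraph V) (P : Finpartition (univ : Finset V)) :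
    modScore G P ≤ modularity G :=
  le_ciSup (modularity_bddAbove G) P

lemma modularity_le_one (G : SimpleGraph V) : modularity G ≤ 1 :=
  ciSup_le fun P => modScore_le_one G P

lemma modularity_nonneg (G : SimpleGraph V) : 0 ≤ modularity G := by
  by_cases h : edgeCount G = 0
  · have h0 : modScore G ⊥ = 0 := by unfold modScore; simp [h]
    rw [← h0]
    exact modScore_le_modularity G ⊥
  · have hne : (univ : Finset V).Nonempty := by
      have hc : G.edgeFinset.Nonempty := Finset.card_pos.mp (Nat.pos_of_ne_zero h)
      obtain ⟨e, he⟩ := hc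
      induction e using Sym2.ind with
      | _ u v => exact ⟨u, Finset.mem_univ u⟩
    have hbot : (univ : Finset V) ≠ ⊥ := by
      rw [Finset.bot_eq_empty]; exact hne.ne_empty
    set P := Finpartition.indiscrete hbot with hP
    have hparts : P.parts = {(univ : Finset V)} := rfl
    have h0 : modScore G P = 0 := by
      unfold modScore
      rw [if_neg h, hparts, Finset.sum_singleton, Finset.sum_singleton]
      have hi : intEdges G univ = edgeCount G := by
        unfold intEdges edgeCount
        rw [Finset.filter_true_of_mem]
        intro e _; intro v _; exact Finset.mem_univ v
      have hd : degSum G univ = 2 * edgeCount G := by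
        unfold degSum edgeCount
        exact SimpleGraph.sum_degrees_eq_twice_card_edges G
      rw [hi, hd]
      have hm : (0 : ℝ) < (edgeCount G : ℝ) := by exact_mod_cast Nat.pos_of_ne_zero h
      push_cast
      field_simp
      ring
    rw [← h0]
    exact modScore_le_modularity G P

end GraphLemmas
section EwSection
variable {α : Type*} [DecidableEq α]

noncomputable def Ew (s : Finset α) (p : ℝ) (f : Finset α → ℝ) : ℝ :=
  ∑ F ∈ s.powerset, p ^ F.card * (1 - p) ^ (s.card - F.card) * f F

lemma Ew_congr {s : Finset α} {p : ℝ} {f g : Finset α → ℝ}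
    (h : ∀ F ∈ s.powerset, f F = g F) : Ew s p f = Ew s p g :=
  Finset.sum_congr rfl fun F hF => by rw [h F hF]

lemma Ew_insert {a : α} {s : Finset α} (ha : a ∉ s) (p : ℝ) (f : Finset α → ℝ) :
    Ew (insert a s) p f = p * Ew s p (fun F => f (insert a F)) + (1 - p) * Ew s p f := by
  unfold Ew
  rw [Finset.powerset_insert, Finset.sum_union, Finset.sum_image]
  · have h1 : ∀ F ∈ s.powerset,
        p ^ F.card * (1 - p) ^ ((insert a s).card - F.card) * f F
          = (1 - p) * (p ^ F.card * (1 - p) ^ (s.card - F.card) * f F) := by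
      intro F hF
      have hFs : F.card ≤ s.card := Finset.card_le_card (Finset.mem_powerset.mp hF)
      rw [Finset.card_insert_of_notMem ha, Nat.succ_sub hFs, pow_succ]
      ring
    have h2 : ∀ F ∈ s.powerset,
        p ^ (insert a F).card * (1 - p) ^ ((insert a s).card - (insert a F).card) * f (insert a F)
          = p * (p ^ F.card * (1 - p) ^ (s.card - F.card) * f (insert a F)) := by
      intro F hF
      have haF : a ∉ F := fun h => ha (Finset.mem_powerset.mp hF h)
      rw [Finset.card_insert_of_notMem ha, Finset.card_insert_of_notMem haF]
      have : s.card + 1 - (F.card + 1) = s.card - F.card := by omega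
      rw [this, pow_succ]
      ring
    rw [Finset.sum_congr rfl h1, Finset.sum_congr rfl h2, ← Finset.mul_sum, ← Finset.mul_sum]
    ring
  · intro F hF F' hF' h
    have haF : a ∉ F := fun hx => ha (Finset.mem_powerset.mp hF hx)
    have haF' : a ∉ F' := fun hx => ha (Finset.mem_powerset.mp hF' hx)
    have := congrArg (fun t => Finset.erase t a) h
    simpa [Finset.erase_insert haF, Finset.erase_insert haF'] using this
  · rw [Finset.disjoint_right]
    rintro F hF hF2
    obtain ⟨F', hF', rfl⟩ := Finset.mem_image.mp hF
    exact ha (Finset.mem_powerset.mp hF2 (Finset.mem_insert_self a F'))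

lemma Ew_const (s : Finset α) (p : ℝ) (c : ℝ) : Ew s p (fun _ => c) = c := by
  induction s using Finset.induction_on with
  | empty => simp [Ew]
  | insert _ _ ha ih => rw [Ew_insert ha]; rw [ih]; ring

lemma Ew_add (s : Finset α) (p : ℝ) (f g : Finset α → ℝ) :
    Ew s p (fun F => f F + g F) = Ew s p f + Ew s p g := by
  unfold Ew
  rw [← Finset.sum_add_distrib]
  exact Finset.sum_congr rfl fun F _ => by ring

lemma Ew_smul (s : Finset α) (p : ℝ) (c : ℝ) (f : Finset α → ℝ) :
    Ew s p (fun F => c * f F) = c * Ew s p f := by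
  unfold Ew
  rw [Finset.mul_sum]
  exact Finset.sum_congr rfl fun F _ => by ring

lemma Ew_sub (s : Finset α) (p : ℝ) (f g : Finset α → ℝ) :
    Ew s p (fun F => f F - g F) = Ew s p f - Ew s p g := by
  have h := Ew_add s p g (fun F => f F - g F)
  have h2 : Ew s p (fun F => g F + (f F - g F)) = Ew s p f := by
    apply Ew_congr; intro F _; ring
  rw [h2] at h; linarith

lemma Ew_sum {β : Type*} (s : Finset α) (p : ℝ) (t : Finset β) (f : β → Finset α → ℝ) :
    Ew s p (fun F => ∑ b ∈ t, f b F) = ∑ b ∈ t, Ew s p (f b) := by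
  induction t using Finset.induction_on with
  | empty => simpa using Ew_const s p 0
  | insert _ _ hb ih =>
      rw [Finset.sum_insert hb, ← ih, ← Ew_add]
      apply Ew_congr; intro F _; rw [Finset.sum_insert hb]

lemma weight_nonneg {s : Finset α} {p : ℝ} (hp0 : 0 ≤ p) (hp1 : p ≤ 1) (F : Finset α) :
    0 ≤ p ^ F.card * (1 - p) ^ (s.card - F.card) := by
  apply mul_nonneg (pow_nonneg hp0 _) (pow_nonneg (by linarith) _)

lemma Ew_mono {s : Finset α} {p : ℝ} (hp0 : 0 ≤ p) (hp1 : p ≤ 1) {f g : Finset α → ℝ}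
    (h : ∀ F ∈ s.powerset, f F ≤ g F) : Ew s p f ≤ Ew s p g := by
  apply Finset.sum_le_sum
  intro F hF
  exact mul_le_mul_of_nonneg_left (h F hF) (weight_nonneg hp0 hp1 F)

lemma Ew_nonneg {s : Finset α} {p : ℝ} (hp0 : 0 ≤ p) (hp1 : p ≤ 1) {f : Finset α → ℝ}
    (h : ∀ F ∈ s.powerset, 0 ≤ f F) : 0 ≤ Ew s p f := by
  have := Ew_mono hp0 hp1 (f := fun _ => (0:ℝ)) (g := f) h
  rwa [Ew_const] at this

lemma Ew_linear (s : Finset α) (p : ℝ) (g : α → ℝ) :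
    Ew s p (fun F => ∑ e ∈ F, g e) = p * ∑ e ∈ s, g e := by
  induction s using Finset.induction_on with
  | empty => simp [Ew]
  | @insert a s ha ih =>
      rw [Ew_insert ha]
      have h1 : Ew s p (fun F => ∑ e ∈ insert a F, g e)
          = Ew s p (fun F => g a + ∑ e ∈ F, g e) := by
        apply Ew_congr; intro F hF
        have haF : a ∉ F := fun hx => ha (Finset.mem_powerset.mp hF hx)
        rw [Finset.sum_insert haF]
      rw [h1, Ew_add, Ew_const, ih, Finset.sum_insert ha]
      ring

lemma Ew_sq (s : Finset α) (p : ℝ) (g : α → ℝ) :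
    Ew s p (fun F => (∑ e ∈ F, g e) ^ 2)
      = p ^ 2 * (∑ e ∈ s, g e) ^ 2 + p * (1 - p) * ∑ e ∈ s, (g e) ^ 2 := by
  induction s using Finset.induction_on with
  | empty => simp [Ew]
  | @insert a s ha ih =>
      rw [Ew_insert ha]
      have h1 : Ew s p (fun F => (∑ e ∈ insert a F, g e) ^ 2)
          = Ew s p (fun F => g a ^ 2 + (2 * g a) * (∑ e ∈ F, g e) + (∑ e ∈ F, g e) ^ 2) := by
        apply Ew_congr; intro F hF
        have haF : a ∉ F := fun hx => ha (Finset.mem_powerset.mp hF hx)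
        rw [Finset.sum_insert haF]; ring
      rw [h1]
      have h2 : Ew s p (fun F => g a ^ 2 + (2 * g a) * (∑ e ∈ F, g e) + (∑ e ∈ F, g e) ^ 2)
          = g a ^ 2 + (2 * g a) * (p * ∑ e ∈ s, g e)
            + (p ^ 2 * (∑ e ∈ s, g e) ^ 2 + p * (1 - p) * ∑ e ∈ s, (g e) ^ 2) := by
        rw [Ew_add, Ew_add, Ew_const, Ew_smul, Ew_linear, ih]
      rw [h2, ih, Finset.sum_insert ha, Finset.sum_insert ha]
      ring

lemma Ew_cauchy {s : Finset α} {p : ℝ} (hp0 : 0 ≤ p) (hp1 : p ≤ 1) (f g : Finset α → ℝ) :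
    (Ew s p (fun F => f F * g F)) ^ 2
      ≤ Ew s p (fun F => f F ^ 2) * Ew s p (fun F => g F ^ 2) := by
  have key : ∀ F : Finset α, (p ^ F.card * (1 - p) ^ (s.card - F.card)) * (f F * g F)
      = (Real.sqrt (p ^ F.card * (1 - p) ^ (s.card - F.card)) * f F)
        * (Real.sqrt (p ^ F.card * (1 - p) ^ (s.card - F.card)) * g F) := by
    intro F
    have hw := weight_nonneg (s := s) hp0 hp1 F
    conv_rhs => rw [mul_mul_mul_comm, Real.mul_self_sqrt hw]
  have h1 : Ew s p (fun F => f F * g F)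
      = ∑ F ∈ s.powerset, (Real.sqrt (p ^ F.card * (1 - p) ^ (s.card - F.card)) * f F)
        * (Real.sqrt (p ^ F.card * (1 - p) ^ (s.card - F.card)) * g F) := by
    apply Finset.sum_congr rfl; intro F _; rw [← key]
  have h2 : Ew s p (fun F => f F ^ 2)
      = ∑ F ∈ s.powerset, (Real.sqrt (p ^ F.card * (1 - p) ^ (s.card - F.card)) * f F) ^ 2 := by
    apply Finset.sum_congr rfl; intro F hF
    have hw := weight_nonneg (s := s) hp0 hp1 F
    rw [mul_pow, Real.sq_sqrt hw]
  have h3 : Ew s p (fun F => g F ^ 2)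
      = ∑ F ∈ s.powerset, (Real.sqrt (p ^ F.card * (1 - p) ^ (s.card - F.card)) * g F) ^ 2 := by
    apply Finset.sum_congr rfl; intro F hF
    have hw := weight_nonneg (s := s) hp0 hp1 F
    rw [mul_pow, Real.sq_sqrt hw]
  rw [h1, h2, h3]
  exact Finset.sum_mul_sq_le_sq_mul_sq _ _ _

lemma Ew_two_stage (s : Finset α) (p q : ℝ) (g : Finset α → ℝ) :
    Ew s p (fun F => Ew F q g) = Ew s (p * q) g := by
  induction s using Finset.induction_on generalizing g with
  | empty => simp [Ew]
  | @insert a s ha ih =>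
      rw [Ew_insert ha, Ew_insert ha]
      have h1 : Ew s p (fun F => Ew (insert a F) q g)
          = Ew s p (fun F => q * Ew F q (fun F' => g (insert a F')) + (1 - q) * Ew F q g) := by
        apply Ew_congr; intro F hF
        have haF : a ∉ F := fun hx => ha (Finset.mem_powerset.mp hF hx)
        rw [Ew_insert haF]
      rw [h1, Ew_add, Ew_smul, Ew_smul, ih, ih]
      ring

end EwSection

section Inner
variable {V : Type} [Fintype V] [DecidableEq V]

lemma expMod_eq_Ew (G : SimpleGraph V) (p : ℝ) :
    expMod G p = Ew G.edgeFinset p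
      (fun F => modularity (SimpleGraph.fromEdgeSet (F : Set (Sym2 V)))) := rfl

noncomputable def indAf {V : Type} [Fintype V] [DecidableEq V] (A : Finset V) (e : Sym2 V) : ℝ :=
  if (∀ v ∈ e, v ∈ A) then (1:ℝ) else 0

noncomputable def wAf {V : Type} [Fintype V] [DecidableEq V] (A : Finset V) (e : Sym2 V) : ℝ :=
  ((A.filter (fun v => v ∈ e)).card : ℝ)

noncomputable def Xf {V : Type} [Fintype V] [DecidableEq V] (P : Finpartition (univ : Finset V))
    (F : Finset (Sym2 V)) : ℝ :=
  ∑ A ∈ P.parts, ∑ e ∈ F, indAf A e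

noncomputable def Yf {V : Type} [Fintype V] [DecidableEq V] (P : Finpartition (univ : Finset V))
    (F : Finset (Sym2 V)) : ℝ :=
  ∑ A ∈ P.parts, (∑ e ∈ F, wAf A e)^2

def Evt {V : Type} (θ μ : ℝ) (F : Finset (Sym2 V)) : Prop :=
  (1-θ)*μ ≤ (F.card : ℝ) ∧ (F.card : ℝ) ≤ (1+θ)*μ

noncomputable def χf {V : Type} (θ μ : ℝ) (F : Finset (Sym2 V)) : ℝ :=
  if Evt θ μ F then 0 else 1

lemma card_filter_cast (F' : Finset (Sym2 V)) (pr : Sym2 V → Prop) [DecidablePred pr] :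
    ((F'.filter pr).card : ℝ) = ∑ e ∈ F', if pr e then (1:ℝ) else 0 := by
  rw [Finset.card_filter]
  push_cast
  apply Finset.sum_congr rfl
  intro e _
  split_ifs <;> simp

section Inner2
variable {V : Type} [Fintype V] [DecidableEq V]

lemma final_algebra {θ q n X₀ Y₀ : ℝ} (hθ0 : 0 < θ) (hθ1 : θ ≤ 1/2) (hq0 : 0 < q)
    (hq1 : q ≤ 1) (hn0 : 0 < n) (hμ : 1 ≤ q * n) (ha0 : 0 ≤ X₀) (ha1 : X₀ ≤ n)
    (hb0 : 0 ≤ Y₀) (hb1 : Y₀ ≤ 4*n^2) :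
    X₀ / n - Y₀ / (4 * n^2) - (9*θ + 2/(θ * Real.sqrt (q*n)) + 4/(q*n))
      ≤ ((1+θ)*(q*n))⁻¹ * (q * X₀ - 2 * Real.sqrt (q*n) / θ)
        - (4*(1-θ)^2*(q*n)^2)⁻¹ * (q^2 * Y₀ + 4*(q*n)) := by
  set μ : ℝ := q * n with hμdef
  have hμ0 : (0:ℝ) < μ := by linarith
  have h1θ : (0:ℝ) < 1 - θ := by linarith
  have h1θ' : (0:ℝ) < 1 + θ := by linarith
  have hsqrtμ : 1 ≤ Real.sqrt μ := by
    rw [show (1:ℝ) = Real.sqrt 1 by simp]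
    exact Real.sqrt_le_sqrt hμ
  have hsqrtμ0 : 0 < Real.sqrt μ := by linarith
  have hsqrtsq : Real.sqrt μ * Real.sqrt μ = μ := Real.mul_self_sqrt (le_of_lt hμ0)
  have hterm1 : X₀ / n - θ ≤ ((1+θ)*μ)⁻¹ * (q * X₀) := by
    have hc1eq : ((1+θ)*μ)⁻¹ * (q * X₀) = (X₀/n) / (1+θ) := by
      rw [hμdef]
      field_simp
    rw [hc1eq, le_div_iff₀ h1θ']
    have han : X₀ / n ≤ 1 := by rw [div_le_one hn0]; exact ha1
    nlinarith [div_nonneg ha0 (le_of_lt hn0)]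
  have hterm2 : ((1+θ)*μ)⁻¹ * (2 * Real.sqrt μ / θ) ≤ 2/(θ * Real.sqrt μ) := by
    have h1 : ((1+θ)*μ)⁻¹ ≤ μ⁻¹ := by
      apply inv_anti₀ hμ0
      nlinarith
    have h2 : ((1+θ)*μ)⁻¹ * (2 * Real.sqrt μ / θ) ≤ μ⁻¹ * (2 * Real.sqrt μ / θ) := by
      apply mul_le_mul_of_nonneg_right h1 (by positivity)
    have h3 : μ⁻¹ * (2 * Real.sqrt μ / θ) = 2/(θ * Real.sqrt μ) := by
      rw [eq_div_iff (by positivity)]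
      field_simp
      nlinarith [hsqrtsq]
    linarith
  have hterm3 : (4*(1-θ)^2*μ^2)⁻¹ * (q^2 * Y₀) ≤ Y₀/(4*n^2) + 8*θ := by
    have hc2eq : (4*(1-θ)^2*μ^2)⁻¹ * (q^2 * Y₀) = (Y₀/(4*n^2)) / ((1-θ)^2) := by
      rw [hμdef]
      field_simp
    rw [hc2eq, div_le_iff₀ (by positivity : (0:ℝ) < (1-θ)^2)]
    have hble : Y₀/(4*n^2) ≤ 1 := by
      rw [div_le_one (by positivity)]
      linarith
    have hbnn : 0 ≤ Y₀/(4*n^2) := by positivity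
    nlinarith [mul_nonneg hθ0.le (mul_nonneg (by linarith : (0:ℝ) ≤ 1-2*θ)
        (by linarith : (0:ℝ) ≤ 3-2*θ)),
      mul_nonneg hθ0.le (by linarith : (0:ℝ) ≤ 1 - Y₀/(4*n^2)),
      mul_nonneg (mul_nonneg hθ0.le hθ0.le) hbnn]
  have hterm4 : (4*(1-θ)^2*μ^2)⁻¹ * (4*μ) ≤ 4/μ := by
    have hc2eq : (4*(1-θ)^2*μ^2)⁻¹ * (4*μ) = 1/((1-θ)^2 * μ) := by
      field_simp
    rw [hc2eq, div_le_div_iff₀ (by positivity) hμ0]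
    nlinarith [mul_nonneg hμ0.le (mul_nonneg (by linarith : (0:ℝ) ≤ 1-2*θ)
        (by linarith : (0:ℝ) ≤ 3-2*θ))]
  have hexpand : ((1+θ)*μ)⁻¹ * (q * X₀ - 2 * Real.sqrt μ / θ)
        - (4*(1-θ)^2*μ^2)⁻¹ * (q^2 * Y₀ + 4*μ)
      = ((1+θ)*μ)⁻¹ * (q * X₀) - ((1+θ)*μ)⁻¹ * (2 * Real.sqrt μ / θ)
        - ((4*(1-θ)^2*μ^2)⁻¹ * (q^2 * Y₀) + (4*(1-θ)^2*μ^2)⁻¹ * (4*μ)) := by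
    ring
  rw [hexpand]
  linarith

lemma inner_score (H : SimpleGraph V) (P : Finpartition (univ : Finset V))
    {q θ : ℝ} (hq0 : 0 < q) (hq1 : q ≤ 1) (hθ0 : 0 < θ) (hθ1 : θ ≤ 1/2)
    (hμ : 1 ≤ q * (edgeCount H : ℝ)) :
    modScore H P
      - (9*θ + 2/(θ * Real.sqrt (q * (edgeCount H : ℝ))) + 4/(q * (edgeCount H : ℝ)))
      ≤ expMod H q := by
  set s := H.edgeFinset with hs
  set n : ℝ := (edgeCount H : ℝ) with hn
  set μ : ℝ := q * n with hμdef
  have hnnn : (0:ℝ) ≤ n := Nat.cast_nonneg _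
  have hn1 : 1 ≤ n := by nlinarith
  have hn0 : 0 < n := by linarith
  have hμ0 : (0:ℝ) < μ := by rw [hμdef]; positivity
  have hne : edgeCount H ≠ 0 := by
    intro h0
    rw [hn, h0] at hn1
    norm_num at hn1
  set c1 : ℝ := ((1+θ)*μ)⁻¹ with hc1
  set c2 : ℝ := (4*(1-θ)^2*μ^2)⁻¹ with hc2
  set X₀ : ℝ := ∑ A ∈ P.parts, (intEdges H A : ℝ) with hX₀
  set Y₀ : ℝ := ∑ A ∈ P.parts, (degSum H A : ℝ)^2 with hY₀
  have h1θ : (0:ℝ) < 1 - θ := by linarith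
  have h1θ' : (0:ℝ) < 1 + θ := by linarith
  -- nonnegativity facts
  have hXnn : ∀ F : Finset (Sym2 V), 0 ≤ Xf P F := by
    intro F
    apply Finset.sum_nonneg; intro A _
    apply Finset.sum_nonneg; intro e _
    unfold indAf
    split_ifs <;> norm_num
  have hYnn : ∀ F : Finset (Sym2 V), 0 ≤ Yf P F := by
    intro F; apply Finset.sum_nonneg; intro A _; exact sq_nonneg _
  have hXleM : ∀ F : Finset (Sym2 V), Xf P F ≤ (F.card : ℝ) := by
    intro F
    unfold Xf
    rw [Finset.sum_comm]
    calc ∑ e ∈ F, ∑ A ∈ P.parts, indAf A e ≤ ∑ e ∈ F, (1:ℝ) := by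
          apply Finset.sum_le_sum
          intro e _
          exact ind_sum_le P e
      _ = (F.card : ℝ) := by simp
  -- pointwise lower bound for modularity of subgraphs
  have hpoint : ∀ F ∈ s.powerset,
      c1 * (if Evt θ μ F then Xf P F else 0) - c2 * Yf P F
        ≤ modularity (SimpleGraph.fromEdgeSet (F : Set (Sym2 V))) := by
    intro F hF
    have hFs : F ⊆ s := Finset.mem_powerset.mp hF
    by_cases hE : Evt θ μ F
    · rw [if_pos hE]
      obtain ⟨hE1, hE2⟩ := hE
      have hθμ : (0:ℝ) < (1-θ)*μ := mul_pos h1θ hμ0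
      have hM0 : (0:ℝ) < (F.card : ℝ) := lt_of_lt_of_le hθμ hE1
      have hFcne : F.card ≠ 0 := by
        intro h0
        rw [h0] at hM0
        norm_num at hM0
      have hX : (∑ A ∈ P.parts, (intEdges (SimpleGraph.fromEdgeSet (F : Set (Sym2 V))) A : ℝ))
          = Xf P F := by
        unfold Xf
        apply Finset.sum_congr rfl
        intro A _
        rw [intEdges_from hFs A, card_filter_cast]
        apply Finset.sum_congr rfl
        intro e _
        unfold indAf
        congr 1
      have hY : (∑ A ∈ P.parts, (degSum (SimpleGraph.fromEdgeSet (F : Set (Sym2 V))) A : ℝ)^2)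
          = Yf P F := by
        unfold Yf
        apply Finset.sum_congr rfl
        intro A _
        rw [degSum_from hFs A]
        unfold wAf
        push_cast
        rfl
      have hscore : modScore (SimpleGraph.fromEdgeSet (F : Set (Sym2 V))) P
          = Xf P F / (F.card : ℝ) - Yf P F / (4 * (F.card : ℝ)^2) := by
        unfold modScore
        rw [if_neg (by rw [edgeCount_from hFs]; exact hFcne)]
        rw [edgeCount_from hFs, hX, hY]
      calc c1 * Xf P F - c2 * Yf P F
          ≤ Xf P F / (F.card : ℝ) - Yf P F / (4 * (F.card : ℝ)^2) := by
            apply sub_le_sub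
            · rw [hc1, div_eq_mul_inv, mul_comm (Xf P F) _]
              apply mul_le_mul_of_nonneg_right _ (hXnn F)
              exact inv_anti₀ hM0 hE2
            · rw [hc2, div_eq_mul_inv, mul_comm (Yf P F) _]
              apply mul_le_mul_of_nonneg_right _ (hYnn F)
              apply inv_anti₀
              · positivity
              · nlinarith
        _ = modScore (SimpleGraph.fromEdgeSet (F : Set (Sym2 V))) P := hscore.symm
        _ ≤ _ := modScore_le_modularity _ P
    · rw [if_neg hE]
      have h2 : c1 * 0 - c2 * Yf P F ≤ 0 := by
        have h1 : 0 ≤ c2 := by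
          rw [hc2]
          apply inv_nonneg.mpr
          positivity
        nlinarith [hYnn F]
      exact le_trans h2 (modularity_nonneg _)
  -- expectation lower bound
  have hmain : Ew s q (fun F => c1 * (if Evt θ μ F then Xf P F else 0) - c2 * Yf P F)
      ≤ expMod H q := by
    rw [expMod_eq_Ew]
    exact Ew_mono (le_of_lt hq0) hq1 hpoint
  have hscard : (s.card : ℝ) = n := by rw [hn]; rfl
  -- moments
  have hEwM : Ew s q (fun F => (F.card : ℝ)) = μ := by
    have h2 : Ew s q (fun F => (F.card : ℝ)) = Ew s q (fun F => ∑ e ∈ F, (1:ℝ)) :=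
      Ew_congr (fun F _ => by simp)
    rw [h2, Ew_linear]
    simp only [Finset.sum_const, nsmul_eq_mul, mul_one]
    rw [hscard, hμdef]
  have hEwM2 : Ew s q (fun F => (F.card : ℝ) ^ 2) = μ^2 + q*(1-q)*n := by
    have h2 : Ew s q (fun F => (F.card : ℝ) ^ 2) = Ew s q (fun F => (∑ e ∈ F, (1:ℝ))^2) :=
      Ew_congr (fun F _ => by simp)
    rw [h2, Ew_sq]
    have hsum : (∑ e ∈ s, (1:ℝ)) = n := by
      simp only [Finset.sum_const, nsmul_eq_mul, mul_one]; exact hscard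
    have hsum2 : (∑ e ∈ s, (1:ℝ)^2) = n := by
      simpa using hsum
    rw [hsum, hsum2, hμdef]
    ring
  have hEwVar : Ew s q (fun F => ((F.card : ℝ) - μ)^2) = q*(1-q)*n := by
    have hexp : Ew s q (fun F => ((F.card : ℝ) - μ)^2)
        = Ew s q (fun F => (F.card : ℝ) ^ 2 + ((-(2*μ)) * (F.card : ℝ) + μ^2)) :=
      Ew_congr (fun F _ => by ring)
    rw [hexp, Ew_add, Ew_add, Ew_smul, Ew_const, hEwM, hEwM2]
    ring
  have hEwX : Ew s q (Xf P) = q * X₀ := by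
    unfold Xf
    rw [Ew_sum, hX₀, Finset.mul_sum]
    apply Finset.sum_congr rfl
    intro A _
    rw [Ew_linear]
    congr 1
    unfold intEdges
    rw [card_filter_cast]
    apply Finset.sum_congr rfl
    intro e _
    unfold indAf
    congr 1
  have hEwY : Ew s q (Yf P) ≤ q^2 * Y₀ + 4*μ := by
    unfold Yf
    rw [Ew_sum]
    have hterm : ∀ A ∈ P.parts, Ew s q (fun F => (∑ e ∈ F, wAf A e)^2)
        = q^2 * (degSum H A : ℝ)^2 + q*(1-q) * ∑ e ∈ s, (wAf A e)^2 := by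
      intro A _
      rw [Ew_sq]
      congr 2
      rw [degSum_eq]
      unfold wAf
      push_cast
      rfl
    rw [Finset.sum_congr rfl hterm, Finset.sum_add_distrib]
    have h1 : ∑ A ∈ P.parts, q^2 * (degSum H A : ℝ)^2 = q^2 * Y₀ := by
      rw [hY₀, Finset.mul_sum]
    have h2 : ∑ A ∈ P.parts, q*(1-q) * ∑ e ∈ s, (wAf A e)^2 ≤ 4*μ := by
      have hq' : q*(1-q) ≤ q := by nlinarith
      have hwnn : ∀ (A : Finset V) (e : Sym2 V), 0 ≤ wAf A e := by
        intro A e; unfold wAf; positivity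
      have hsq : ∀ e : Sym2 V, ∑ A ∈ P.parts, (wAf A e)^2 ≤ 4 := by
        intro e
        have hle : ∑ A ∈ P.parts, (wAf A e)^2 ≤ (∑ A ∈ P.parts, wAf A e)^2 :=
          Finset.sum_sq_le_sq_sum_of_nonneg (fun A _ => hwnn A e)
        have hsum : ∑ A ∈ P.parts, wAf A e ≤ 2 := by
          have h3 := sum_wA_le P e
          unfold wAf
          rw [← Nat.cast_sum]
          exact_mod_cast h3
        have h0 : 0 ≤ ∑ A ∈ P.parts, wAf A e := Finset.sum_nonneg fun A _ => hwnn A e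
        nlinarith
      calc ∑ A ∈ P.parts, q*(1-q) * ∑ e ∈ s, (wAf A e)^2
          ≤ ∑ A ∈ P.parts, q * ∑ e ∈ s, (wAf A e)^2 := by
            apply Finset.sum_le_sum
            intro A _
            apply mul_le_mul_of_nonneg_right hq'
            apply Finset.sum_nonneg; intro e _; exact sq_nonneg _
        _ = q * ∑ e ∈ s, ∑ A ∈ P.parts, (wAf A e)^2 := by
            rw [← Finset.mul_sum, Finset.sum_comm]
        _ ≤ q * ∑ e ∈ s, (4:ℝ) := by
            apply mul_le_mul_of_nonneg_left _ (le_of_lt hq0)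
            exact Finset.sum_le_sum (fun e _ => hsq e)
        _ ≤ 4 * μ := by
            rw [Finset.sum_const, nsmul_eq_mul, hscard, hμdef]
            nlinarith
    linarith
  -- complement indicator facts
  have hχnn : ∀ F : Finset (Sym2 V), 0 ≤ χf θ μ F := by
    intro F; unfold χf; split_ifs <;> norm_num
  have hχle : ∀ F : Finset (Sym2 V), χf θ μ F ≤ ((θ*μ)⁻¹)^2 * ((F.card : ℝ) - μ)^2 := by
    intro F
    unfold χf
    split_ifs with hE
    · positivity
    · have habs : θ*μ ≤ |(F.card : ℝ) - μ| := by
        unfold Evt at hE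
        push_neg at hE
        rcases le_or_gt ((1-θ)*μ) ((F.card : ℝ)) with h | h
        · have h2 := hE h
          rw [abs_of_pos (by nlinarith)]
          nlinarith
        · rw [abs_of_neg (by nlinarith)]
          nlinarith
      have hθμ0 : (0:ℝ) < θ*μ := mul_pos hθ0 hμ0
      have h2 : (θ*μ)^2 ≤ ((F.card : ℝ) - μ)^2 := by
        calc (θ*μ)^2 ≤ |(F.card : ℝ) - μ|^2 := by
              apply pow_le_pow_left₀ (le_of_lt hθμ0) habs
        _ = ((F.card : ℝ) - μ)^2 := sq_abs _
      rw [show ((θ*μ)⁻¹)^2 * ((F.card : ℝ) - μ)^2 = ((F.card : ℝ) - μ)^2 / (θ*μ)^2 by ring]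
      rw [le_div_iff₀ (by positivity)]
      linarith
  have hEwχ : Ew s q (χf θ μ) ≤ 1/(θ^2*μ) := by
    have h1 : Ew s q (χf θ μ) ≤ Ew s q (fun F => ((θ*μ)⁻¹)^2 * ((F.card : ℝ) - μ)^2) :=
      Ew_mono (le_of_lt hq0) hq1 (fun F _ => hχle F)
    rw [Ew_smul, hEwVar] at h1
    have hvar : q*(1-q)*n ≤ μ := by rw [hμdef]; nlinarith
    have hθμ0 : (0:ℝ) < θ*μ := mul_pos hθ0 hμ0
    have h3 : ((θ*μ)⁻¹)^2 * (q*(1-q)*n) ≤ ((θ*μ)⁻¹)^2 * μ := by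
      apply mul_le_mul_of_nonneg_left hvar (by positivity)
    have h4 : ((θ*μ)⁻¹)^2 * μ = 1/(θ^2*μ) := by
      field_simp
    linarith
  -- Cauchy-Schwarz for E[χ M]
  have hEwχM : Ew s q (fun F => χf θ μ F * (F.card : ℝ)) ≤ 2 * Real.sqrt μ / θ := by
    have hχsq : Ew s q (fun F => χf θ μ F ^ 2) = Ew s q (χf θ μ) := by
      apply Ew_congr; intro F _
      unfold χf; split_ifs <;> norm_num
    have hMsqnn : (0:ℝ) ≤ Ew s q (fun F => (F.card : ℝ) ^2) := by
      apply Ew_nonneg (le_of_lt hq0) hq1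
      intro F _; exact sq_nonneg _
    have hχEnn : (0:ℝ) ≤ Ew s q (χf θ μ) := by
      apply Ew_nonneg (le_of_lt hq0) hq1
      intro F _; exact hχnn F
    have hprod : Ew s q (χf θ μ) * Ew s q (fun F => (F.card : ℝ) ^ 2)
        ≤ (1/(θ^2*μ)) * (2*μ^2) := by
      apply mul_le_mul hEwχ _ hMsqnn (by positivity)
      rw [hEwM2]
      nlinarith
    have hsq2 : (Ew s q (fun F => χf θ μ F * (F.card : ℝ)))^2 ≤ (2 * Real.sqrt μ / θ)^2 := by
      have hrhs : (2 * Real.sqrt μ / θ)^2 = 4 * μ / θ^2 := by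
        rw [div_pow, mul_pow]
        rw [Real.sq_sqrt (le_of_lt hμ0)]
        ring
      rw [hrhs]
      calc (Ew s q (fun F => χf θ μ F * (F.card : ℝ)))^2
          ≤ Ew s q (fun F => χf θ μ F ^2) * Ew s q (fun F => (F.card : ℝ) ^2) :=
            Ew_cauchy (le_of_lt hq0) hq1 (χf θ μ) (fun F => (F.card : ℝ))
        _ = Ew s q (χf θ μ) * Ew s q (fun F => (F.card : ℝ) ^2) := by rw [hχsq]
        _ ≤ (1/(θ^2*μ)) * (2*μ^2) := hprod
        _ ≤ 4 * μ / θ^2 := by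
            rw [show (1/(θ^2*μ)) * (2*μ^2) = 2*μ/θ^2 by field_simp]
            apply div_le_div_of_nonneg_right _ (by positivity)
            linarith
    have hnn : 0 ≤ Ew s q (fun F => χf θ μ F * (F.card : ℝ)) := by
      apply Ew_nonneg (le_of_lt hq0) hq1
      intro F _
      apply mul_nonneg (hχnn F) (Nat.cast_nonneg _)
    have hrhsnn : 0 ≤ 2 * Real.sqrt μ / θ := by positivity
    nlinarith
  -- lower bound on E[1_E X]
  have hdecomp : Ew s q (fun F => if Evt θ μ F then Xf P F else 0)
      = Ew s q (Xf P) - Ew s q (fun F => χf θ μ F * Xf P F) := by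
    rw [← Ew_sub]
    apply Ew_congr; intro F _
    unfold χf
    split_ifs <;> ring
  have hχX : Ew s q (fun F => χf θ μ F * Xf P F) ≤ 2 * Real.sqrt μ / θ := by
    refine le_trans ?_ hEwχM
    apply Ew_mono (le_of_lt hq0) hq1
    intro F _
    exact mul_le_mul_of_nonneg_left (hXleM F) (hχnn F)
  have hEwIX : q * X₀ - 2 * Real.sqrt μ / θ
      ≤ Ew s q (fun F => if Evt θ μ F then Xf P F else 0) := by
    rw [hdecomp, hEwX]
    linarith
  -- combine
  have hc1nn : 0 ≤ c1 := by
    rw [hc1]; apply inv_nonneg.mpr; positivity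
  have hc2nn : 0 ≤ c2 := by
    rw [hc2]; apply inv_nonneg.mpr; positivity
  have hfinal : c1 * (q * X₀ - 2 * Real.sqrt μ / θ) - c2 * (q^2 * Y₀ + 4*μ) ≤ expMod H q := by
    refine le_trans ?_ hmain
    have hlhs : Ew s q (fun F => c1 * (if Evt θ μ F then Xf P F else 0) - c2 * Yf P F)
        = c1 * Ew s q (fun F => if Evt θ μ F then Xf P F else 0) - c2 * Ew s q (Yf P) := by
      rw [Ew_sub, Ew_smul, Ew_smul]
    rw [hlhs]
    apply sub_le_sub
    · exact mul_le_mul_of_nonneg_left hEwIX hc1nn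
    · exact mul_le_mul_of_nonneg_left hEwY hc2nn
  refine le_trans ?_ hfinal
  -- final algebra
  have hsqrtμ : 1 ≤ Real.sqrt μ := by
    rw [show (1:ℝ) = Real.sqrt 1 by simp]
    exact Real.sqrt_le_sqrt hμ
  have hsqrtμ0 : 0 < Real.sqrt μ := by linarith
  have hsqrtsq : Real.sqrt μ * Real.sqrt μ = μ := Real.mul_self_sqrt (le_of_lt hμ0)
  have ha1 : X₀ / n ≤ 1 := by
    rw [div_le_one hn0, hX₀, hn, ← Nat.cast_sum]
    exact_mod_cast sum_intEdges_le H P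
  have ha0 : 0 ≤ X₀ := by
    rw [hX₀]; apply Finset.sum_nonneg; intro A _; positivity
  have hb0 : 0 ≤ Y₀ := by
    rw [hY₀]; apply Finset.sum_nonneg; intro A _; exact sq_nonneg _
  have hb1 : Y₀ ≤ 4 * n^2 := by
    rw [hY₀]
    have hle : ∑ A ∈ P.parts, (degSum H A : ℝ)^2 ≤ (∑ A ∈ P.parts, (degSum H A : ℝ))^2 :=
      Finset.sum_sq_le_sq_sum_of_nonneg (fun A _ => Nat.cast_nonneg _)
    have hsum : ∑ A ∈ P.parts, (degSum H A : ℝ) = 2 * n := by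
      rw [← Nat.cast_sum, hn]
      exact_mod_cast sum_degSum H P
    rw [hsum] at hle
    nlinarith
  have hmodsc : modScore H P = X₀ / n - Y₀ / (4 * n^2) := by
    unfold modScore
    rw [if_neg hne]
  rw [hmodsc, hc1, hc2, hμdef, hn]
  exact final_algebra hθ0 hθ1 hq0 hq1 hn0 (by rw [hμdef, hn] at hμ; exact hμ) ha0
    (by rw [div_le_one hn0] at ha1; exact ha1) hb0 hb1

end Inner2

section Final
variable {V : Type} [Fintype V] [DecidableEq V]

lemma expMod_nonneg (G : SimpleGraph V) {q : ℝ} (hq0 : 0 ≤ q) (hq1 : q ≤ 1) :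
    0 ≤ expMod G q := by
  rw [expMod_eq_Ew]
  exact Ew_nonneg hq0 hq1 (fun F _ => modularity_nonneg _)

lemma Ew_card {α : Type*} [DecidableEq α] (s : Finset α) (p : ℝ) :
    Ew s p (fun F => (F.card : ℝ)) = p * s.card := by
  have h2 : Ew s p (fun F => (F.card : ℝ)) = Ew s p (fun F => ∑ e ∈ F, (1:ℝ)) :=
    Ew_congr (fun F _ => by simp)
  rw [h2, Ew_linear]
  simp

lemma Ew_card_var {α : Type*} [DecidableEq α] (s : Finset α) (p : ℝ) :
    Ew s p (fun F => ((F.card : ℝ) - p * s.card)^2) = p*(1-p)*s.card := by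
  have hsq : Ew s p (fun F => (F.card : ℝ)^2) = (p*s.card)^2 + p*(1-p)*s.card := by
    have h2 : Ew s p (fun F => (F.card : ℝ)^2) = Ew s p (fun F => (∑ e ∈ F, (1:ℝ))^2) :=
      Ew_congr (fun F _ => by simp)
    rw [h2, Ew_sq]
    have hsum : (∑ e ∈ s, (1:ℝ)) = s.card := by simp
    have hsum2 : (∑ e ∈ s, (1:ℝ)^2) = s.card := by simp
    rw [hsum, hsum2]
    ring
  have hexp : Ew s p (fun F => ((F.card : ℝ) - p * s.card)^2)
      = Ew s p (fun F => (F.card : ℝ)^2 + ((-(2*p*s.card)) * (F.card : ℝ) + (p*s.card)^2)) :=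
    Ew_congr (fun F _ => by ring)
  rw [hexp, Ew_add, Ew_add, Ew_smul, Ew_const, Ew_card, hsq]
  ring

lemma inner_eps {ε : ℝ} (hε : 0 < ε) :
    ∃ c₁ : ℝ, 1 ≤ c₁ ∧ ∀ (V : Type) [Fintype V] [DecidableEq V] (H : SimpleGraph V) (q : ℝ),
      0 < q → q ≤ 1 → c₁ ≤ q * (edgeCount H : ℝ) → modularity H - ε ≤ expMod H q := by
  set θ : ℝ := min (ε/27) (1/2) with hθ
  have hθ0 : 0 < θ := lt_min (by positivity) (by norm_num)
  have hθ1 : θ ≤ 1/2 := min_le_right _ _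
  have hθε : 9*θ ≤ ε/3 := by
    have h := min_le_left (ε/27) (1/2)
    rw [hθ]
    linarith
  refine ⟨1 + 12/ε + 36/(θ^2*ε^2), ?_, ?_⟩
  · have h1 : 0 < 12/ε := by positivity
    have h2 : 0 < 36/(θ^2*ε^2) := by positivity
    linarith
  · intro V _ _ H q hq0 hq1 hc
    set μ := q * (edgeCount H : ℝ) with hμdef
    have h1 : 0 < 12/ε := by positivity
    have h2 : 0 < 36/(θ^2*ε^2) := by positivity
    have hμ1 : 1 ≤ μ := by linarith
    have hμ0 : 0 < μ := by linarith
    have h12 : 12/ε ≤ μ := by linarith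
    have h36 : 36/(θ^2*ε^2) ≤ μ := by linarith
    have e2 : 4/μ ≤ ε/3 := by
      rw [div_le_div_iff₀ hμ0 (by norm_num)]
      rw [div_le_iff₀ hε] at h12
      linarith
    have e1 : 2/(θ * Real.sqrt μ) ≤ ε/3 := by
      have hs6 : 6/(θ*ε) ≤ Real.sqrt μ := by
        have hsq : (6/(θ*ε))^2 ≤ μ := by
          have : (6/(θ*ε))^2 = 36/(θ^2*ε^2) := by
            rw [div_pow]
            congr 1 <;> ring
          linarith [this ▸ h36]
        have h0 : 0 ≤ 6/(θ*ε) := by positivity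
        calc 6/(θ*ε) = Real.sqrt ((6/(θ*ε))^2) := (Real.sqrt_sq h0).symm
          _ ≤ Real.sqrt μ := Real.sqrt_le_sqrt hsq
      have hsμ0 : 0 < Real.sqrt μ := Real.sqrt_pos.mpr hμ0
      rw [div_le_div_iff₀ (by positivity) (by norm_num)]
      have h3 : 6/(θ*ε) * (θ*ε) ≤ Real.sqrt μ * (θ*ε) := by
        apply mul_le_mul_of_nonneg_right hs6 (by positivity)
      rw [div_mul_cancel₀ (6:ℝ) (by positivity : (θ*ε) ≠ 0)] at h3
      nlinarith
    have hbound : ∀ P : Finpartition (univ : Finset V), modScore H P ≤ expMod H q + ε := by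
      intro P
      have hsc := inner_score H P hq0 hq1 hθ0 hθ1 hμ1
      rw [← hμdef] at hsc
      linarith
    have hsup : modularity H ≤ expMod H q + ε := ciSup_le hbound
    linarith

end Final


/-- Under-sampling does not significantly underestimate modularity on average:
for every ε > 0 there is c > 0 such that for every 0 < p₀ ≤ 1 and every finite
graph H with e(H)·p₀ ≥ c, E[q*(H_{p₀})] > sup_{p₀ ≤ p ≤ 1} E[q*(H_p)] − ε
(equivalently, E[q*(H_p)] − ε < E[q*(H_{p₀})] for every p₀ ≤ p ≤ 1). -/
theorem statement18 :
    ∀ ε : ℝ, 0 < ε →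
      ∃ c : ℝ, 0 < c ∧
        ∀ (V : Type) [Fintype V] [DecidableEq V] (G : SimpleGraph V) (p₀ : ℝ),
          0 < p₀ → p₀ ≤ 1 → c ≤ (edgeCount G : ℝ) * p₀ →
          ∀ p : ℝ, p₀ ≤ p → p ≤ 1 → expMod G p - ε < expMod G p₀ := by

  intro ε hε
  obtain ⟨c₁, hc₁1, hc₁⟩ := inner_eps (half_pos hε)
  refine ⟨2*c₁ + 16/ε, by positivity, ?_⟩
  intro V _ _ G p₀ hp₀0 hp₀1 hcμ p hpp₀ hp1
  have hp0 : 0 < p := lt_of_lt_of_le hp₀0 hpp₀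
  set q := p₀ / p with hqdef
  have hq0 : 0 < q := div_pos hp₀0 hp0
  have hq1 : q ≤ 1 := div_le_one_of_le₀ hpp₀ hp0.le
  have hpq : p * q = p₀ := by
    rw [hqdef]
    field_simp
  set s := G.edgeFinset with hs
  set n : ℝ := (edgeCount G : ℝ) with hn
  have hc0 : (0:ℝ) < 2*c₁ + 16/ε := by positivity
  have hnp₀ : 2*c₁ + 16/ε ≤ n * p₀ := hcμ
  have hn0 : 0 < n := by nlinarith
  have hnp0 : 0 < n * p := by positivity
  -- two-stage decomposition
  have hts : expMod G p₀
      = Ew s p (fun F => expMod (SimpleGraph.fromEdgeSet (F : Set (Sym2 V))) q) := by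
    rw [expMod_eq_Ew, ← hpq, ← Ew_two_stage]
    apply Ew_congr
    intro F hF
    have hFs : F ⊆ s := Finset.mem_powerset.mp hF
    rw [expMod_eq_Ew, edgeFinset_from hFs]
  -- pointwise estimate
  have hpt : ∀ F ∈ s.powerset,
      modularity (SimpleGraph.fromEdgeSet (F : Set (Sym2 V))) - ε/2
          - (if q * (F.card:ℝ) < c₁ then (1:ℝ) else 0)
        ≤ expMod (SimpleGraph.fromEdgeSet (F : Set (Sym2 V))) q := by
    intro F hF
    have hFs : F ⊆ s := Finset.mem_powerset.mp hF
    by_cases hgood : c₁ ≤ q * (F.card:ℝ)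
    · rw [if_neg (not_lt.mpr hgood)]
      have h := hc₁ V (SimpleGraph.fromEdgeSet (F : Set (Sym2 V))) q hq0 hq1
        (by rw [edgeCount_from hFs]; exact hgood)
      linarith
    · rw [if_pos (not_le.mp hgood)]
      have h1 := modularity_le_one (SimpleGraph.fromEdgeSet (F : Set (Sym2 V)))
      have h2 := expMod_nonneg (SimpleGraph.fromEdgeSet (F : Set (Sym2 V))) hq0.le hq1
      linarith
  have hmono : Ew s p (fun F => modularity (SimpleGraph.fromEdgeSet (F : Set (Sym2 V))) - ε/2
        - (if q * (F.card:ℝ) < c₁ then (1:ℝ) else 0))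
      ≤ expMod G p₀ := by
    rw [hts]
    exact Ew_mono hp0.le hp1 hpt
  -- bad-event probability
  have hbad : Ew s p (fun F => if q * (F.card:ℝ) < c₁ then (1:ℝ) else 0) ≤ ε/4 := by
    have hsn : (s.card : ℝ) = n := by rw [hn]; rfl
    have h16 : (0:ℝ) < 16/ε := by positivity
    have hc₁half : c₁ ≤ n * p₀ / 2 := by linarith
    have hpw : ∀ F ∈ s.powerset, (if q * (F.card:ℝ) < c₁ then (1:ℝ) else 0)
        ≤ (2/(n*p))^2 * ((F.card:ℝ) - p * s.card)^2 := by
      intro F _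
      split_ifs with hb
      · have h3 : q * (F.card:ℝ) < n * p₀ / 2 := lt_of_lt_of_le hb hc₁half
        have h4 : (F.card:ℝ) < (n * p₀ / 2) / q := by
          rw [lt_div_iff₀ hq0]
          nlinarith
        have h5 : (n * p₀ / 2) / q = n*p/2 := by
          rw [hqdef]
          field_simp
        have hcard : (F.card:ℝ) < n*p/2 := by
          rw [h5] at h4
          exact h4
        have hdiff : n*p/2 < |(F.card:ℝ) - p * s.card| := by
          rw [hsn, abs_of_neg (by nlinarith [(Nat.cast_nonneg F.card : (0:ℝ) ≤ F.card)] :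
            (F.card:ℝ) - p * n < 0)]
          nlinarith
        have hsq : (n*p/2)^2 < ((F.card:ℝ) - p * s.card)^2 := by
          calc (n*p/2)^2 < |(F.card:ℝ) - p * s.card|^2 := by
                apply pow_lt_pow_left₀ hdiff (by positivity) (by norm_num)
            _ = ((F.card:ℝ) - p * s.card)^2 := sq_abs _
        rw [show (2/(n*p))^2 * ((F.card:ℝ) - p * s.card)^2
            = ((F.card:ℝ) - p * s.card)^2 / (n*p/2)^2 by field_simp]
        rw [le_div_iff₀ (by positivity)]
        linarith
      · positivity
    have h6 : Ew s p (fun F => if q * (F.card:ℝ) < c₁ then (1:ℝ) else 0)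
        ≤ Ew s p (fun F => (2/(n*p))^2 * ((F.card:ℝ) - p * s.card)^2) :=
      Ew_mono hp0.le hp1 hpw
    rw [Ew_smul, Ew_card_var, hsn] at h6
    have h7 : (2/(n*p))^2 * (p*(1-p)*n) ≤ 4/(n*p) := by
      rw [show (2/(n*p))^2 * (p*(1-p)*n) = 4*(1-p)/(n*p) by field_simp; ring]
      rw [div_le_div_iff₀ hnp0 hnp0]
      nlinarith
    have h8 : 4/(n*p) ≤ ε/4 := by
      have hnpp : n * p₀ ≤ n * p := mul_le_mul_of_nonneg_left hpp₀ hn0.le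
      have hge : 16/ε ≤ n*p := by linarith
      rw [div_le_iff₀ hε] at hge
      rw [div_le_div_iff₀ hnp0 (by norm_num : (0:ℝ) < 4)]
      nlinarith
    linarith
  -- assemble
  have e1 := Ew_sub s p
    (fun F => modularity (SimpleGraph.fromEdgeSet (F : Set (Sym2 V))) - ε/2)
    (fun F => if q * (F.card:ℝ) < c₁ then (1:ℝ) else 0)
  have e2 := Ew_sub s p
    (fun F => modularity (SimpleGraph.fromEdgeSet (F : Set (Sym2 V))))
    (fun _ => ε/2)
  rw [e1, e2, Ew_const] at hmono
  rw [← expMod_eq_Ew] at hmono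
  linarith
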